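/- Let G be an additive abelian group and let q, h, m, k, n be natural numbers with q • g = 0 for all g ∈ G, with h*m ≡ 1 (mod q), and with n = m + k*q. Then the operation u : (Fin n → G) → G defined by u(x) = ∑_{i} h • (x i) is an n-ary exact-m-majority operation on G: for all a, b ∈ G and every x : Fin n → G such that the set S = {i : x i = a} has exactly m elements and x i = b for all i ∉ S, one has u x = a; moreover u(a, ..., a) = a for all a ∈ G. -/

import Mathlib

theorem stmt4 {G : Type*} [AddCommGroup G] (q h m k n : ℕ)
    (hq : ∀ g : G, q • g = 0) (hhm : h * m ≡ 1 [MOD q]) (hn : n = m + k * q) :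
    (∀ a : G, (∑ _i : Fin n, h • a) = a) ∧
    ∀ (a b : G) (x : Fin n → G),
      {i : Fin n | x i = a}.ncard = m → (∀ i, x i ≠ a → x i = b) →
        (∑ i : Fin n, h • x i) = a := by
  have key : ∀ t : ℕ, t ≡ 1 [MOD q] → ∀ g : G, t • g = g := by
    intro t ht g
    have h1 : t % q = 1 % q := ht
    have h2 : t • g = (t % q) • g := by
      conv_lhs => rw [← Nat.div_add_mod t q]
      rw [add_nsmul, mul_nsmul, hq, smul_zero, zero_add]
    have h3 : (1 : ℕ) • g = (1 % q) • g := by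
      conv_lhs => rw [← Nat.div_add_mod 1 q]
      rw [add_nsmul, mul_nsmul, hq, smul_zero, zero_add]
    rw [h2, h1, ← h3, one_nsmul]
  have hqz : ∀ (c : ℕ) (g : G), (c * q) • g = 0 := by
    intro c g; simp [mul_nsmul, hq]
  constructor
  · intro a
    rw [Finset.sum_const, Finset.card_univ, Fintype.card_fin, smul_smul]
    refine key (n * h) ?_ a
    have : n * h = h * m + h * k * q := by rw [hn]; ring
    rw [this]
    simpa using hhm.add ((Nat.modEq_zero_iff_dvd).2 ⟨h*k, by ring⟩ : h * k * q ≡ 0 [MOD q])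
  · intro a b x hcard hb
    classical
    set s : Finset (Fin n) := Finset.univ.filter (fun i => x i = a) with hs
    have hsc : s.card = m := by
      rw [← hcard]
      rw [Set.ncard_eq_toFinset_card']
      congr 1
      ext i
      simp [hs]
    rw [← Finset.sum_filter_add_sum_filter_not Finset.univ (fun i => x i = a)]
    have e1 : ∑ i ∈ s, h • x i = a := by
      rw [Finset.sum_congr rfl (fun i hi => by
        rw [(Finset.mem_filter.1 hi).2]), Finset.sum_const, hsc, smul_smul]
      exact key (m * h) (by rwa [mul_comm]) a
    have e2 : ∑ i ∈ Finset.univ.filter (fun i => ¬ x i = a), h • x i = 0 := by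
      rw [Finset.sum_congr rfl (fun i hi => by
        rw [hb i (Finset.mem_filter.1 hi).2]), Finset.sum_const, smul_smul]
      have hc : (Finset.univ.filter (fun i => ¬ x i = a)).card = k * q := by
        have := Finset.card_filter_add_card_filter_not (s := Finset.univ)
          (p := fun i => x i = a)
        simp only [Finset.card_univ, Fintype.card_fin] at this
        rw [← hs] at this
        omega
      have : k * q * h = (k * h) * q := by ring
      rw [hc, this]
      exact hqz _ _
    rw [e1, e2, add_zero]
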